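/- Let D ≥ 1, M ≥ 1, and let p = (p_α)_{α∈ℤ₊^D} be a probability mass function on ℤ₊^D with p_α > 0 for every α. Let A_1,…,A_M be i.i.d. ℤ₊^D-valued random variables with law p and set N_α := #{1 ≤ i ≤ M : A_i = α}. For each α ∈ ℤ₊^D and each n ≥ 1 let F_α^n be an integrable real-valued random variable with E[F_α^n] = μ_α (the same value for all n ≥ 1), the whole family (F_α^n)_{α,n} being independent of (A_1,…,A_M); set F_α^0 := 0. Assume Σ_{α∈ℤ₊^D} sup_{n≥1} E[|F_α^n|] < ∞. Then the randomized multi-index estimator F̂ := Σ_{α∈ℤ₊^D} (N_α/(M p_α)) F_α^{N_α} (almost surely a finite sum, since at most M of the counts N_α are nonzero) is integrable and is free from discretization bias: E[F̂] = Σ_{α∈ℤ₊^D} μ_α, the series on the right converging absolutely. -/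

import Mathlib

open MeasureTheory ProbabilityTheory

open scoped Classical

/-- unbiasedness of the randomized multi-index estimator. Indices
`A 1, …, A M` are drawn i.i.d. from a positive pmf `p` on `ℤ₊^D`; `N α` counts
the draws equal to `α`; the estimators `F α n` (for `n ≥ 1`) are integrable with
mean `m α` independent of `n`, `F α 0 = 0`, and the whole family `F` is
independent of the draws. If `Σ_α sup_{n ≥ 1} E|F α n| < ∞`, then
`F̂ = Σ_α (N α / (M p α)) F α (N α)` is integrable and
`E[F̂] = Σ_α m α`, the series converging absolutely. -/
theorem rMIMC_unbiased {Ω : Type*} [MeasurableSpace Ω]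
    (μ : Measure Ω) [IsProbabilityMeasure μ]
    (D M : ℕ) (hD : 1 ≤ D) (hM : 1 ≤ M)
    (p : (Fin D → ℕ) → ℝ) (hp : ∀ α, 0 < p α) (hpsum : ∑' α, p α = 1)
    (A : Fin M → Ω → (Fin D → ℕ)) (hAmeas : ∀ i, Measurable (A i))
    (hAiid : iIndepFun A μ)
    (hAlaw : ∀ i α, μ (A i ⁻¹' {α}) = ENNReal.ofReal (p α))
    (F : (Fin D → ℕ) → ℕ → Ω → ℝ)
    (hFint : ∀ α n, Integrable (F α n) μ)
    (hF0 : ∀ α ω, F α 0 ω = 0)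
    (m : (Fin D → ℕ) → ℝ)
    (hFmean : ∀ α, ∀ n, 1 ≤ n → (∫ ω, F α n ω ∂μ) = m α)
    (hFindepA : IndepFun (fun ω => fun q : (Fin D → ℕ) × ℕ => F q.1 q.2 ω)
      (fun ω => fun i : Fin M => A i ω) μ)
    (hsummable : (∑' α : Fin D → ℕ, ⨆ n : ℕ, ∫⁻ ω, ‖F α (n + 1) ω‖₊ ∂μ) < ⊤)
    (N : (Fin D → ℕ) → Ω → ℕ)
    (hN : ∀ α ω, N α ω = (Finset.univ.filter (fun i : Fin M => A i ω = α)).card)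
    (Fhat : Ω → ℝ)
    (hFhat : ∀ ω, Fhat ω = ∑' α : Fin D → ℕ,
      ((N α ω : ℝ) / (M * p α)) * F α (N α ω) ω) :
    Integrable Fhat μ ∧ Summable (fun α : Fin D → ℕ => |m α|) ∧
      (∫ ω, Fhat ω ∂μ) = ∑' α : Fin D → ℕ, m α := by
  -- notation
  set g : (Fin D → ℕ) → Ω → ℝ :=
    fun α ω => ((N α ω : ℝ) / (M * p α)) * F α (N α ω) ω with hg_def
  have hMp : ∀ α, (0:ℝ) < M * p α := fun α =>
    mul_pos (by exact_mod_cast Nat.cast_pos.mpr hM) (hp α)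
  -- measurability of N
  have hNmeas : ∀ α, Measurable (N α) := by
    intro α
    have : N α = (fun a : Fin M → (Fin D → ℕ) =>
        (Finset.univ.filter (fun i => a i = α)).card) ∘ (fun ω i => A i ω) :=
      funext fun ω => hN α ω
    rw [this]
    exact (measurable_of_countable _).comp (measurable_pi_lambda _ hAmeas)
  have hNle : ∀ α ω, N α ω ≤ M := by
    intro α ω
    rw [hN]
    calc (Finset.univ.filter (fun i : Fin M => A i ω = α)).card
        ≤ (Finset.univ : Finset (Fin M)).card := Finset.card_filter_le _ _
      _ = M := by simp
  -- independence of F α k and the indicator of {N α = k}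
  have hIndep : ∀ α k (u : ℝ → ℝ), Measurable u →
      IndepFun (fun ω => if N α ω = k then (1:ℝ) else 0) (fun ω => u (F α k ω)) μ := by
    intro α k u hu
    have h := hFindepA.comp (show Measurable (fun h : ((Fin D → ℕ) × ℕ) → ℝ => u (h (α, k))) from
        hu.comp (measurable_pi_apply (α, k)))
      (measurable_of_countable (fun a : Fin M → (Fin D → ℕ) =>
        if (Finset.univ.filter (fun i => a i = α)).card = k then (1:ℝ) else 0))
    have h2 : (fun ω => if N α ω = k then (1:ℝ) else 0) =
        ((fun a : Fin M → (Fin D → ℕ) =>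
          if (Finset.univ.filter (fun i => a i = α)).card = k then (1:ℝ) else 0) ∘
          (fun ω => fun i : Fin M => A i ω)) := by
      funext ω
      simp only [Function.comp, hN]
    rw [h2]
    exact h.symm
  -- indicator integrability and integral
  have hIeq : ∀ (α : Fin D → ℕ) (k : ℕ), (fun ω => if N α ω = k then (1:ℝ) else 0) =
      (N α ⁻¹' {k}).indicator (fun _ => (1:ℝ)) := by
    intro α k
    funext ω
    simp [Set.indicator_apply]
  have hIint : ∀ α k, Integrable (fun ω => if N α ω = k then (1:ℝ) else 0) μ := by
    intro α k
    rw [hIeq]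
    exact (integrable_const (1:ℝ)).indicator (hNmeas α (measurableSet_singleton k))
  have hIval : ∀ α k, ∫ ω, (if N α ω = k then (1:ℝ) else 0) ∂μ = (μ (N α ⁻¹' {k})).toReal := by
    intro α k
    rw [hIeq, integral_indicator_const (1:ℝ) (hNmeas α (measurableSet_singleton k))]
    simp
    rfl
  -- the key factorization
  have hkey : ∀ α k (u : ℝ → ℝ), Measurable u → Integrable (fun ω => u (F α k ω)) μ →
      ∫ ω, (if N α ω = k then (1:ℝ) else 0) * u (F α k ω) ∂μ
        = (μ (N α ⁻¹' {k})).toReal * ∫ ω, u (F α k ω) ∂μ := by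
    intro α k u hu hui
    rw [(hIndep α k u hu).integral_fun_mul_eq_mul_integral (hIint α k).1 hui.1, hIval]
  -- expected count: ∑ k k * q = M * p α
  have hEN : ∀ α, ∑ k ∈ Finset.range (M+1), (k:ℝ) * (μ (N α ⁻¹' {k})).toReal = M * p α := by
    intro α
    have h1 : ∀ ω, (N α ω : ℝ) = ∑ i : Fin M, if A i ω = α then (1:ℝ) else 0 := by
      intro ω
      rw [hN, Finset.card_filter]
      push_cast [apply_ite ((↑) : ℕ → ℝ)]
      rfl
    have h2 : ∀ ω, (N α ω : ℝ)
        = ∑ k ∈ Finset.range (M+1), if N α ω = k then (k:ℝ) else 0 := by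
      intro ω
      rw [Finset.sum_ite_eq, if_pos (Finset.mem_range.mpr (Nat.lt_succ_of_le (hNle α ω)))]
    have hint1 : ∀ i : Fin M, Integrable (fun ω => if A i ω = α then (1:ℝ) else 0) μ := by
      intro i
      have : (fun ω => if A i ω = α then (1:ℝ) else 0) =
          (A i ⁻¹' {α}).indicator (fun _ => (1:ℝ)) := by
        funext ω; simp [Set.indicator_apply]
      rw [this]
      exact (integrable_const (1:ℝ)).indicator ((hAmeas i) (measurableSet_singleton α))
    have hint2 : ∀ k, Integrable (fun ω => if N α ω = k then (k:ℝ) else 0) μ := by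
      intro k
      have : (fun ω => if N α ω = k then (k:ℝ) else 0) =
          fun ω => (k:ℝ) * (if N α ω = k then (1:ℝ) else 0) := by
        funext ω; simp [mul_ite]
      rw [this]
      exact (hIint α k).const_mul _
    have e1 : ∫ ω, (N α ω : ℝ) ∂μ = M * p α := by
      calc ∫ ω, (N α ω : ℝ) ∂μ = ∫ ω, ∑ i : Fin M, (if A i ω = α then (1:ℝ) else 0) ∂μ := by
            simp_rw [h1]
        _ = ∑ i : Fin M, ∫ ω, (if A i ω = α then (1:ℝ) else 0) ∂μ :=
            integral_finset_sum _ (fun i _ => hint1 i)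
        _ = ∑ i : Fin M, p α := by
            refine Finset.sum_congr rfl fun i _ => ?_
            have : (fun ω => if A i ω = α then (1:ℝ) else 0) =
                (A i ⁻¹' {α}).indicator (fun _ => (1:ℝ)) := by
              funext ω; simp [Set.indicator_apply]
            rw [this, integral_indicator_const (1:ℝ) ((hAmeas i) (measurableSet_singleton α)),
              measureReal_def, hAlaw, ENNReal.toReal_ofReal (hp α).le, smul_eq_mul, mul_one]
        _ = M * p α := by simp [Finset.sum_const, mul_comm]
    have e2 : ∫ ω, (N α ω : ℝ) ∂μ
        = ∑ k ∈ Finset.range (M+1), (k:ℝ) * (μ (N α ⁻¹' {k})).toReal := by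
      calc ∫ ω, (N α ω : ℝ) ∂μ
          = ∫ ω, ∑ k ∈ Finset.range (M+1), (if N α ω = k then (k:ℝ) else 0) ∂μ := by
            simp_rw [← h2]
        _ = ∑ k ∈ Finset.range (M+1), ∫ ω, (if N α ω = k then (k:ℝ) else 0) ∂μ :=
            integral_finset_sum _ (fun k _ => hint2 k)
        _ = ∑ k ∈ Finset.range (M+1), (k:ℝ) * (μ (N α ⁻¹' {k})).toReal := by
            refine Finset.sum_congr rfl fun k _ => ?_
            have : (fun ω => if N α ω = k then (k:ℝ) else 0) =
                fun ω => (k:ℝ) * (if N α ω = k then (1:ℝ) else 0) := by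
              funext ω; simp [mul_ite]
            rw [this, integral_const_mul, hIval]
    rw [← e2, e1]
  -- normalized count sum is 1
  have hcsum : ∀ α, ∑ k ∈ Finset.range (M+1),
      ((k:ℝ) / (M * p α)) * (μ (N α ⁻¹' {k})).toReal = 1 := by
    intro α
    have : ∀ k : ℕ, ((k:ℝ) / (M * p α)) * (μ (N α ⁻¹' {k})).toReal
        = ((k:ℝ) * (μ (N α ⁻¹' {k})).toReal) / (M * p α) := by
      intro k; ring
    simp_rw [this, ← Finset.sum_div, hEN α]
    exact div_self (hMp α).ne'
  -- pointwise finite-sum representation of g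
  have hg_rep : ∀ α ω, g α ω = ∑ k ∈ Finset.range (M+1),
      (if N α ω = k then (1:ℝ) else 0) * (((k:ℝ) / (M * p α)) * F α k ω) := by
    intro α ω
    have : ∀ k, (if N α ω = k then (1:ℝ) else 0) * (((k:ℝ) / (M * p α)) * F α k ω)
        = if N α ω = k then ((k:ℝ) / (M * p α)) * F α k ω else 0 := by
      intro k; split <;> simp
    simp_rw [this]
    rw [Finset.sum_ite_eq, if_pos (Finset.mem_range.mpr (Nat.lt_succ_of_le (hNle α ω)))]
  -- integrability of each g α
  have hterm_int : ∀ α k, Integrable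
      (fun ω => (if N α ω = k then (1:ℝ) else 0) * (((k:ℝ) / (M * p α)) * F α k ω)) μ := by
    intro α k
    refine Integrable.bdd_mul ((hFint α k).const_mul _) (hIint α k).1 (c := 1) (ae_of_all _ fun ω => ?_)
    split <;> simp
  have hg_int : ∀ α, Integrable (g α) μ := by
    intro α
    have : g α = fun ω => ∑ k ∈ Finset.range (M+1),
        (if N α ω = k then (1:ℝ) else 0) * (((k:ℝ) / (M * p α)) * F α k ω) :=
      funext (hg_rep α)
    rw [this]
    exact integrable_finset_sum _ (fun k _ => hterm_int α k)
  -- the integral of g α is m α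
  have hg_integral : ∀ α, ∫ ω, g α ω ∂μ = m α := by
    intro α
    have e0 : ∫ ω, g α ω ∂μ = ∑ k ∈ Finset.range (M+1),
        ∫ ω, (if N α ω = k then (1:ℝ) else 0) * (((k:ℝ) / (M * p α)) * F α k ω) ∂μ := by
      rw [show (fun ω => g α ω) = fun ω => ∑ k ∈ Finset.range (M+1),
        (if N α ω = k then (1:ℝ) else 0) * (((k:ℝ) / (M * p α)) * F α k ω) from
        funext (hg_rep α)]
      exact integral_finset_sum _ (fun k _ => hterm_int α k)
    have e1 : ∀ k, ∫ ω, (if N α ω = k then (1:ℝ) else 0) * (((k:ℝ) / (M * p α)) * F α k ω) ∂μ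
        = ((k:ℝ) / (M * p α)) * ((μ (N α ⁻¹' {k})).toReal * ∫ ω, F α k ω ∂μ) := by
      intro k
      have : (fun ω => (if N α ω = k then (1:ℝ) else 0) * (((k:ℝ) / (M * p α)) * F α k ω))
          = fun ω => ((k:ℝ) / (M * p α)) * ((if N α ω = k then (1:ℝ) else 0) * F α k ω) := by
        funext ω; ring
      rw [this, integral_const_mul]
      exact congrArg (fun x => ((k:ℝ) / (M * p α)) * x)
        (hkey α k id measurable_id (hFint α k))
    rw [e0]
    simp_rw [e1]
    have e2 : ∀ k ∈ Finset.range (M+1),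
        ((k:ℝ) / (M * p α)) * ((μ (N α ⁻¹' {k})).toReal * ∫ ω, F α k ω ∂μ)
        = (((k:ℝ) / (M * p α)) * (μ (N α ⁻¹' {k})).toReal) * m α := by
      intro k _
      match k with
      | 0 => simp
      | (n+1) =>
        rw [hFmean α (n+1) (Nat.succ_le_succ (Nat.zero_le n))]
        ring
    rw [Finset.sum_congr rfl e2, ← Finset.sum_mul, hcsum α, one_mul]
  -- uniform bound on ∫ |F α k| for k ≥ 1
  set T : (Fin D → ℕ) → ENNReal := fun α => ⨆ n : ℕ, ∫⁻ ω, ‖F α (n + 1) ω‖₊ ∂μ with hT_def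
  have hTlt : ∀ α, T α ≠ ⊤ := by
    intro α
    exact ((ENNReal.le_tsum α).trans_lt hsummable).ne
  have habs_le : ∀ α k, 1 ≤ k → ∫ ω, |F α k ω| ∂μ ≤ (T α).toReal := by
    intro α k hk
    obtain ⟨n, rfl⟩ : ∃ n, k = n + 1 := ⟨k - 1, (Nat.succ_pred_eq_of_pos hk).symm⟩
    have e : ∫ ω, |F α (n+1) ω| ∂μ = (∫⁻ ω, ‖F α (n+1) ω‖₊ ∂μ).toReal := by
      simp_rw [← enorm_eq_nnnorm]
      rw [← ofReal_integral_norm_eq_lintegral_enorm (hFint α (n+1)),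
        ENNReal.toReal_ofReal (integral_nonneg fun ω => norm_nonneg _)]
      simp [Real.norm_eq_abs]
    rw [e]
    exact ENNReal.toReal_mono (hTlt α) (le_iSup (fun n => ∫⁻ ω, ‖F α (n + 1) ω‖₊ ∂μ) n)
  -- bound on ∫ |g α|
  have habs_g : ∀ α, ∫ ω, |g α ω| ∂μ ≤ (T α).toReal := by
    intro α
    have hrep : ∀ ω, |g α ω| = ∑ k ∈ Finset.range (M+1),
        (if N α ω = k then (1:ℝ) else 0) * (((k:ℝ) / (M * p α)) * |F α k ω|) := by
      intro ω
      have h1 : ∀ k, (if N α ω = k then (1:ℝ) else 0) * (((k:ℝ) / (M * p α)) * |F α k ω|)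
          = if N α ω = k then ((k:ℝ) / (M * p α)) * |F α k ω| else 0 := by
        intro k; split <;> simp
      simp_rw [h1]
      rw [Finset.sum_ite_eq, if_pos (Finset.mem_range.mpr (Nat.lt_succ_of_le (hNle α ω)))]
      rw [hg_def]
      simp only []
      rw [abs_mul, abs_of_nonneg (div_nonneg (Nat.cast_nonneg _) (hMp α).le)]
    have hterm_int' : ∀ k, Integrable
        (fun ω => (if N α ω = k then (1:ℝ) else 0) * (((k:ℝ) / (M * p α)) * |F α k ω|)) μ := by
      intro k
      refine Integrable.bdd_mul ((hFint α k).abs.const_mul _) (hIint α k).1 (c := 1) (ae_of_all _ fun ω => ?_)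
      split <;> simp
    have e0 : ∫ ω, |g α ω| ∂μ = ∑ k ∈ Finset.range (M+1),
        ∫ ω, (if N α ω = k then (1:ℝ) else 0) * (((k:ℝ) / (M * p α)) * |F α k ω|) ∂μ := by
      rw [show (fun ω => |g α ω|) = fun ω => ∑ k ∈ Finset.range (M+1),
        (if N α ω = k then (1:ℝ) else 0) * (((k:ℝ) / (M * p α)) * |F α k ω|) from
        funext hrep]
      exact integral_finset_sum _ (fun k _ => hterm_int' k)
    have e1 : ∀ k, ∫ ω, (if N α ω = k then (1:ℝ) else 0) * (((k:ℝ) / (M * p α)) * |F α k ω|) ∂μ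
        = ((k:ℝ) / (M * p α)) * ((μ (N α ⁻¹' {k})).toReal * ∫ ω, |F α k ω| ∂μ) := by
      intro k
      have : (fun ω => (if N α ω = k then (1:ℝ) else 0) * (((k:ℝ) / (M * p α)) * |F α k ω|))
          = fun ω => ((k:ℝ) / (M * p α)) * ((if N α ω = k then (1:ℝ) else 0) * |F α k ω|) := by
        funext ω; ring
      rw [this, integral_const_mul]
      exact congrArg (fun x => ((k:ℝ) / (M * p α)) * x)
        (hkey α k (fun x => |x|) (continuous_abs.measurable) (hFint α k).abs)
    rw [e0]
    simp_rw [e1]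
    calc ∑ k ∈ Finset.range (M+1),
          ((k:ℝ) / (M * p α)) * ((μ (N α ⁻¹' {k})).toReal * ∫ ω, |F α k ω| ∂μ)
        ≤ ∑ k ∈ Finset.range (M+1),
          (((k:ℝ) / (M * p α)) * (μ (N α ⁻¹' {k})).toReal) * (T α).toReal := by
          refine Finset.sum_le_sum fun k _ => ?_
          match k with
          | 0 => simp
          | (n+1) =>
            rw [mul_assoc]
            refine mul_le_mul_of_nonneg_left ?_
              (div_nonneg (Nat.cast_nonneg _) (hMp α).le)
            exact mul_le_mul_of_nonneg_left
              (habs_le α (n+1) (Nat.succ_le_succ (Nat.zero_le n))) ENNReal.toReal_nonneg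
      _ = (T α).toReal := by rw [← Finset.sum_mul, hcsum α, one_mul]
  -- summability in ℝ≥0∞ of the lintegrals of ‖g α‖
  have hg_lint : ∀ α, ∫⁻ ω, ‖g α ω‖₊ ∂μ ≤ T α := by
    intro α
    simp_rw [← enorm_eq_nnnorm]
    rw [← ofReal_integral_norm_eq_lintegral_enorm (hg_int α)]
    calc ENNReal.ofReal (∫ ω, ‖g α ω‖ ∂μ) ≤ ENNReal.ofReal (T α).toReal := by
          apply ENNReal.ofReal_le_ofReal
          simpa [Real.norm_eq_abs] using habs_g α
      _ = T α := ENNReal.ofReal_toReal (hTlt α)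
  have hgsum : (∑' α, ∫⁻ ω, ‖g α ω‖₊ ∂μ) ≠ ⊤ :=
    ((ENNReal.tsum_le_tsum hg_lint).trans_lt hsummable).ne
  -- a.e. summability
  have hmeasg : ∀ α : Fin D → ℕ, AEMeasurable (fun ω => (‖g α ω‖₊ : ENNReal)) μ :=
    fun α => (hg_int α).aestronglyMeasurable.enorm
  have hae_sum : ∀ᵐ ω ∂μ, Summable fun α => ‖g α ω‖ := by
    have hne : ∫⁻ ω, ∑' α, (‖g α ω‖₊ : ENNReal) ∂μ ≠ ⊤ := by
      rw [lintegral_tsum hmeasg]; exact hgsum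
    filter_upwards [ae_lt_top' (AEMeasurable.ennreal_tsum hmeasg) hne] with ω hω
    have := ENNReal.tsum_coe_ne_top_iff_summable_coe.mp hω.ne
    simpa [coe_nnnorm] using this
  -- measurability of the tsum
  haveI : Infinite (Fin D → ℕ) :=
    Infinite.of_injective (fun n : ℕ => (fun _ => n : Fin D → ℕ))
      (fun a b h => congrFun h ⟨0, hD⟩)
  obtain ⟨den⟩ := nonempty_denumerable (Fin D → ℕ)
  let e : ℕ ≃ (Fin D → ℕ) := (Denumerable.eqv (Fin D → ℕ)).symm
  have hASM : AEStronglyMeasurable (fun ω => ∑' α, g α ω) μ := by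
    refine aestronglyMeasurable_of_tendsto_ae Filter.atTop
      (f := fun n ω => ∑ k ∈ Finset.range n, g (e k) ω)
      (fun n => (Finset.range n).aestronglyMeasurable_fun_sum
        fun k _ => (hg_int _).aestronglyMeasurable) ?_
    filter_upwards [hae_sum] with ω hω
    have hs : Summable fun α => g α ω := hω.of_norm
    exact ((e.hasSum_iff.mpr hs.hasSum)).tendsto_sum_nat
  -- integrability of Fhat
  have hFhat_eq : Fhat = fun ω => ∑' α, g α ω := funext hFhat
  have hFhat_int : Integrable Fhat μ := by
    rw [hFhat_eq]
    refine ⟨hASM, ?_⟩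
    show (∫⁻ ω, ‖∑' α, g α ω‖₊ ∂μ) < ⊤
    calc ∫⁻ ω, ‖∑' α, g α ω‖₊ ∂μ
        ≤ ∫⁻ ω, ∑' α, (‖g α ω‖₊ : ENNReal) ∂μ := by
          refine lintegral_mono_ae ?_
          filter_upwards [hae_sum] with ω hω
          calc (‖∑' α, g α ω‖₊ : ENNReal)
              = ENNReal.ofReal ‖∑' α, g α ω‖ := (ofReal_norm _).symm
            _ ≤ ENNReal.ofReal (∑' α, ‖g α ω‖) :=
                ENNReal.ofReal_le_ofReal (norm_tsum_le_tsum_norm hω)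
            _ = ∑' α, (‖g α ω‖₊ : ENNReal) := by
                rw [ENNReal.ofReal_tsum_of_nonneg (fun _ => norm_nonneg _) hω]
                simp_rw [ofReal_norm, enorm_eq_nnnorm]
      _ = ∑' α, ∫⁻ ω, ‖g α ω‖₊ ∂μ := lintegral_tsum hmeasg
      _ < ⊤ := hgsum.lt_top
  -- summability of |m|
  have hTsummable : Summable fun α => (T α).toReal := ENNReal.summable_toReal hsummable.ne
  have hm_le : ∀ α, |m α| ≤ (T α).toReal := by
    intro α
    rw [← hFmean α 1 le_rfl]
    calc |∫ ω, F α 1 ω ∂μ| ≤ ∫ ω, |F α 1 ω| ∂μ := by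
          simpa [Real.norm_eq_abs] using norm_integral_le_integral_norm (μ := μ) (F α 1)
      _ ≤ (T α).toReal := habs_le α 1 le_rfl
  have hm_summable : Summable fun α => |m α| :=
    Summable.of_nonneg_of_le (fun α => abs_nonneg _) hm_le hTsummable
  -- conclusion
  refine ⟨hFhat_int, hm_summable, ?_⟩
  rw [hFhat_eq]
  rw [integral_tsum (fun α => (hg_int α).aestronglyMeasurable) hgsum]
  exact tsum_congr hg_integral
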